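/- arXiv:2601.17988 — 2 statements merged into one kernel-verified Lean document; each statement's English description precedes it below -/
import Mathlib

section
/- Let G be a metrizable topological semigroup with a right unit e_G (i.e. g·e_G = g for all g∈G), and let X = (X_g)_{g∈G} be a stationary G-process. Then X is stochastically continuous if and only if for every E in the product σ-algebra ℬ^G and every g₀∈G, the function G → [0,1], g ↦ ℙ_X(Q_g⁻¹(E) △ Q_{g₀}⁻¹(E)), is continuous. -/
open MeasureTheory ProbabilityTheory Filter Topology symmDiff
open scoped ENNReal NNReal

noncomputable section

namespace Paper

variable {G : Type*} {Ω : Type*}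

/-- The distribution of a `G`-process: the pushforward of `P` on `ℝ^G`. -/
def procLaw [MeasurableSpace Ω] (P : Measure Ω) (X : G → Ω → ℝ) : Measure (G → ℝ) :=
  Measure.map (fun ω g => X g ω) P

/-- The left translation `R_g` of `ℝ^G`, `R_g((x_h)_h) = (x_{g⁻¹ h})_h`. -/
def shiftMap [Group G] (g : G) : (G → ℝ) → G → ℝ := fun x h => x (g⁻¹ * h)

/-- The (possibly non-invertible) right-style translation `Q_g((x_h)_h) = (x_{g h})_h`. -/
def transMap [Mul G] (g : G) : (G → ℝ) → G → ℝ := fun x h => x (g * h)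

/-- (Left) stationarity of a `G`-process. -/
def Stationary [Mul G] [MeasurableSpace Ω] (P : Measure Ω) (X : G → Ω → ℝ) : Prop :=
  ∀ g : G, procLaw P (fun h => X (g * h)) = procLaw P X

/-- Ergodicity of a stationary `G`-process: every a.s. translation-invariant measurable set
in `ℝ^G` has law-measure `0` or `1`. -/
def ErgodicProcess [Group G] [MeasurableSpace Ω] (P : Measure Ω) (X : G → Ω → ℝ) : Prop :=
  ∀ E : Set (G → ℝ), MeasurableSet E →
    (∀ g : G, procLaw P X ((shiftMap g ⁻¹' E) ∆ E) = 0) →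
    procLaw P X E = 0 ∨ procLaw P X E = 1

/-- Weak mixing of a stationary `G`-process: the diagonal product system
`{R_g × R_g}` on `(ℝ^G × ℝ^G, ℙ_X ⊗ ℙ_X)` is ergodic. -/
def WeaklyMixingProcess [Group G] [MeasurableSpace Ω] (P : Measure Ω) (X : G → Ω → ℝ) : Prop :=
  ∀ E : Set ((G → ℝ) × (G → ℝ)), MeasurableSet E →
    (∀ g : G, ((procLaw P X).prod (procLaw P X))
        (((fun p => (shiftMap g p.1, shiftMap g p.2)) ⁻¹' E) ∆ E) = 0) →
    ((procLaw P X).prod (procLaw P X)) E = 0 ∨ ((procLaw P X).prod (procLaw P X)) E = 1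

/-- Separability in probability of a `G`-process. -/
def SeparableInProbability [MeasurableSpace Ω] (P : Measure Ω) (X : G → Ω → ℝ) : Prop :=
  ∃ S : Set G, S.Countable ∧
    ∀ g : G, ∃ s : ℕ → G, (∀ n, s n ∈ S) ∧
      TendstoInMeasure P (fun n => X (s n)) atTop (X g)

/-- The finite dimensional distribution of the process along `gs : Fin n → G`. -/
def fdd [MeasurableSpace Ω] (P : Measure Ω) (X : G → Ω → ℝ) {n : ℕ} (gs : Fin n → G) :
    Measure (Fin n → ℝ) :=
  Measure.map (fun ω i => X (gs i) ω) P

/-- A measure on `ℝⁿ` is infinitely divisible if for every `m` it is the `m`-fold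
convolution power of some probability measure. -/
def InfinitelyDivisible {n : ℕ} (μ : Measure (Fin n → ℝ)) : Prop :=
  ∀ m : ℕ, 0 < m → ∃ ν : Measure (Fin n → ℝ), IsProbabilityMeasure ν ∧
    μ = Measure.map (fun x : Fin m → Fin n → ℝ => ∑ i, x i) (Measure.pi fun _ => ν)

/-- A `G`-process is infinitely divisible if all its finite dimensional
distributions are infinitely divisible. -/
def InfinitelyDivisibleProcess [MeasurableSpace Ω] (P : Measure Ω) (X : G → Ω → ℝ) : Prop :=
  ∀ (n : ℕ) (gs : Fin n → G), InfinitelyDivisible (fdd P X gs)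

/-- Stochastic continuity of a process indexed by a topological group (or semigroup). -/
def StochasticallyContinuous [TopologicalSpace G] [MeasurableSpace Ω]
    (P : Measure Ω) (X : G → Ω → ℝ) : Prop :=
  ∀ g₀ : G, TendstoInMeasure P X (𝓝 g₀) (X g₀)

/-- All finite dimensional characteristic functions of the process are nowhere vanishing. -/
def CharFunNonVanishing [MeasurableSpace Ω] (P : Measure Ω) (X : G → Ω → ℝ) : Prop :=
  ∀ (n : ℕ) (gs : Fin n → G) (t : Fin n → ℝ),
    (∫ x, Complex.exp (Complex.I * ((∑ i, t i * x i : ℝ) : ℂ)) ∂(fdd P X gs)) ≠ 0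

/-- A measure on `ℝⁿ` is a (possibly degenerate) Gaussian measure iff each of its
one-dimensional linear-functional pushforwards is a real Gaussian. -/
def IsGaussianMeasure {n : ℕ} (μ : Measure (Fin n → ℝ)) : Prop :=
  ∀ t : Fin n → ℝ, ∃ (m : ℝ) (v : NNReal),
    Measure.map (fun x => ∑ i, t i * x i) μ = gaussianReal m v

/-- A Gaussian `G`-process: all finite dimensional distributions are
(possibly degenerate) Gaussian. -/
def GaussianProcess [MeasurableSpace Ω] (P : Measure Ω) (X : G → Ω → ℝ) : Prop :=
  ∀ (n : ℕ) (gs : Fin n → G), IsGaussianMeasure (fdd P X gs)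

/-- Ergodicity of a probability preserving `Θ`-system (maps need not be invertible). -/
def ErgodicSystem {Θ 𝕏 : Type*} [MeasurableSpace 𝕏] (ξ : Measure 𝕏) (T : Θ → 𝕏 → 𝕏) : Prop :=
  ∀ A : Set 𝕏, MeasurableSet A → (∀ θ : Θ, ξ ((T θ ⁻¹' A) ∆ A) = 0) →
    ξ A = 0 ∨ ξ A = 1

/-- A probability preserving automorphism: a bi-measurable measure-preserving bijection
between full-measure measurable subsets. -/
def IsPPAutomorphism [MeasurableSpace Ω] (P : Measure Ω) (T : Ω → Ω) : Prop :=
  Measurable T ∧ (∀ A : Set Ω, MeasurableSet A → P (T ⁻¹' A) = P A) ∧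
  ∃ (A B : Set Ω) (σ : Ω → Ω), MeasurableSet A ∧ MeasurableSet B ∧
    P A = 1 ∧ P B = 1 ∧ Measurable σ ∧ Set.MapsTo T A B ∧ Set.MapsTo σ B A ∧
    Set.InvOn σ T A B

set_option linter.unusedSectionVars false

lemma measurable_transMap [Mul G] (g : G) : Measurable (transMap (G := G) g) :=
  measurable_pi_lambda _ fun h => measurable_pi_apply (g * h)

lemma tendstoInMeasure_pi [MeasurableSpace Ω] (P : Measure Ω)
    {ι : Type*} [Fintype ι] {F : ℕ → Ω → ι → ℝ} {Flim : Ω → ι → ℝ}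
    (h : ∀ i, TendstoInMeasure P (fun n ω => F n ω i) atTop (fun ω => Flim ω i)) :
    TendstoInMeasure P F atTop Flim := by
  rw [tendstoInMeasure_iff_dist]
  intro ε hε
  have hle : ∀ n, P {ω | ε ≤ dist (F n ω) (Flim ω)}
      ≤ ∑ i, P {ω | ε ≤ dist (F n ω i) (Flim ω i)} := by
    intro n
    refine le_trans (measure_mono ?_) (measure_iUnion_fintype_le _ _)
    intro ω hω
    simp only [Set.mem_setOf_eq] at hω
    by_contra hc
    simp only [Set.mem_iUnion, Set.mem_setOf_eq, not_exists, not_le] at hc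
    exact absurd hω (not_le.2 ((dist_pi_lt_iff hε).2 hc))
  have hsum : Tendsto (fun n => ∑ i, P {ω | ε ≤ dist (F n ω i) (Flim ω i)}) atTop (𝓝 0) := by
    have := tendsto_finset_sum Finset.univ (fun (i : ι) (_ : i ∈ Finset.univ) => tendstoInMeasure_iff_dist.1 (h i) ε hε)
    simpa using this
  exact tendsto_of_tendsto_of_tendsto_of_le_of_le tendsto_const_nhds hsum
    (fun n => zero_le) hle

section Setup

variable [Mul G] [MeasurableSpace Ω] {P : Measure Ω} {X : G → Ω → ℝ}

lemma measurable_procMap (hmeas : ∀ g, Measurable (X g)) :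
    Measurable (fun ω (g : G) => X g ω) :=
  measurable_pi_lambda _ hmeas

lemma procLaw_apply (hmeas : ∀ g, Measurable (X g)) {A : Set (G → ℝ)}
    (hA : MeasurableSet A) :
    procLaw P X A = P ((fun ω (g : G) => X g ω) ⁻¹' A) :=
  Measure.map_apply (measurable_procMap hmeas) hA

lemma procLaw_transMap (hmeas : ∀ g, Measurable (X g)) (g : G) :
    procLaw P (fun h => X (g * h)) = (procLaw P X).map (transMap g) := by
  unfold procLaw
  rw [Measure.map_map (measurable_transMap g) (measurable_procMap hmeas)]
  rfl

lemma procLaw_invariant (hmeas : ∀ g, Measurable (X g)) (hstat : Stationary P X)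
    (g : G) {A : Set (G → ℝ)} (hA : MeasurableSet A) :
    procLaw P X (transMap g ⁻¹' A) = procLaw P X A := by
  conv_rhs => rw [← hstat g, procLaw_transMap hmeas g,
    Measure.map_apply (measurable_transMap g) hA]

end Setup

section Main

variable [Semigroup G] [TopologicalSpace G] [TopologicalSpace.MetrizableSpace G]
  [ContinuousMul G] [MeasurableSpace Ω] {P : Measure Ω} [IsProbabilityMeasure P]
  {X : G → Ω → ℝ}

lemma cyl_seq (hmeas : ∀ g, Measurable (X g)) (hstat : Stationary P X)
    (hsc : StochasticallyContinuous P X)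
    (s : Finset G) {B : Set (∀ i : s, ℝ)} (hB : MeasurableSet B) (g₁ : G)
    {u : ℕ → G} (hu : Tendsto u atTop (𝓝 g₁)) :
    Tendsto (fun n => procLaw P X
        ((transMap (u n) ⁻¹' cylinder s B) ∆ (transMap g₁ ⁻¹' cylinder s B)))
      atTop (𝓝 0) := by
  classical
  set Z : G → Ω → (∀ i : s, ℝ) := fun g ω i => X (g * ↑i) ω with hZ
  have hZmeas : ∀ g, Measurable (Z g) := fun g => measurable_pi_lambda _ fun i => hmeas _
  have hcylmeas : MeasurableSet (cylinder s B) := MeasurableSet.cylinder (α := fun _ : G => ℝ) s hB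
  have hμeq : ∀ g g' : G, procLaw P X
      ((transMap g ⁻¹' cylinder s B) ∆ (transMap g' ⁻¹' cylinder s B))
      = P ((Z g ⁻¹' B) ∆ (Z g' ⁻¹' B)) := by
    intro g g'
    rw [procLaw_apply hmeas ((measurable_transMap g hcylmeas).symmDiff
      (measurable_transMap g' hcylmeas)), Set.preimage_symmDiff]
    rfl
  set proj : (G → ℝ) → (∀ i : s, ℝ) := fun x i => x ↑i with hproj
  have hprojmeas : Measurable proj := measurable_pi_lambda _ fun i => measurable_pi_apply _
  set ν : Measure (∀ i : s, ℝ) := (procLaw P X).map proj with hν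
  have hlaw : ∀ g : G, P.map (Z g) = ν := by
    intro g
    rw [hν, ← hstat g]
    unfold procLaw
    rw [Measure.map_map hprojmeas (measurable_procMap fun h => hmeas (g * h))]
    rfl
  haveI hPμ : IsProbabilityMeasure (procLaw P X) :=
    Measure.isProbabilityMeasure_map (measurable_procMap hmeas).aemeasurable
  haveI hPν : IsProbabilityMeasure ν := Measure.isProbabilityMeasure_map hprojmeas.aemeasurable
  have hZconv : TendstoInMeasure P (fun n => Z (u n)) atTop (Z g₁) := by
    refine tendstoInMeasure_pi P fun i => ?_
    intro ε hε
    have hmul : Tendsto (fun n => u n * (i : G)) atTop (𝓝 (g₁ * (i : G))) :=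
      ((continuous_mul_right (i : G)).tendsto g₁).comp hu
    exact (hsc (g₁ * (i : G)) ε hε).comp hmul
  rw [ENNReal.tendsto_nhds_zero]
  intro ε hε
  set δ : ℝ≥0∞ := min 1 (ε / 4) with hδ
  have hδpos : 0 < δ := lt_min one_pos (ENNReal.div_pos hε.ne' (by norm_num))
  have hδle : δ ≤ ε / 4 := min_le_right _ _
  set I : (∀ i : s, ℝ) → ℝ := B.indicator (fun _ => (1 : ℝ)) with hI
  have hImeas : Measurable I := measurable_const.indicator hB
  have hind : Integrable I ν := (integrable_const (1 : ℝ)).indicator hB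
  obtain ⟨f, hf, -⟩ := hind.exists_boundedContinuous_lintegral_sub_le hδpos.ne'
  have hfmeas : Measurable (f : (∀ i : s, ℝ) → ℝ) := f.continuous.measurable
  have hint1 : ∀ g : G, (∫⁻ ω, (‖I (Z g ω) - f (Z g ω)‖₊ : ℝ≥0∞) ∂P) ≤ δ := by
    intro g
    have : (∫⁻ ω, (‖I (Z g ω) - f (Z g ω)‖₊ : ℝ≥0∞) ∂P)
        = ∫⁻ y, (‖I y - f y‖₊ : ℝ≥0∞) ∂(P.map (Z g)) := by
      rw [lintegral_map (f := fun y => (‖I y - f y‖₊ : ℝ≥0∞))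
        (hImeas.sub hfmeas).nnnorm.coe_nnreal_ennreal (hZmeas g)]
    rw [this, hlaw g]
    exact hf
  have hptw : ∀ n ω, ((Z (u n) ⁻¹' B) ∆ (Z g₁ ⁻¹' B)).indicator (1 : Ω → ℝ≥0∞) ω
      ≤ (‖I (Z (u n) ω) - f (Z (u n) ω)‖₊ : ℝ≥0∞)
        + (‖f (Z (u n) ω) - f (Z g₁ ω)‖₊ : ℝ≥0∞)
        + (‖f (Z g₁ ω) - I (Z g₁ ω)‖₊ : ℝ≥0∞) := by
    intro n ω
    have heq : ((Z (u n) ⁻¹' B) ∆ (Z g₁ ⁻¹' B)).indicator (1 : Ω → ℝ≥0∞) ω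
        = (‖I (Z (u n) ω) - I (Z g₁ ω)‖₊ : ℝ≥0∞) := by
      by_cases h1 : Z (u n) ω ∈ B <;> by_cases h2 : Z g₁ ω ∈ B <;>
        simp [Set.indicator_apply, Set.mem_symmDiff, h1, h2, hI]
    rw [heq]
    have hsplit : I (Z (u n) ω) - I (Z g₁ ω)
        = (I (Z (u n) ω) - f (Z (u n) ω)) + (f (Z (u n) ω) - f (Z g₁ ω))
          + (f (Z g₁ ω) - I (Z g₁ ω)) := by ring
    calc (‖I (Z (u n) ω) - I (Z g₁ ω)‖₊ : ℝ≥0∞)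
        = (‖(I (Z (u n) ω) - f (Z (u n) ω)) + (f (Z (u n) ω) - f (Z g₁ ω))
            + (f (Z g₁ ω) - I (Z g₁ ω))‖₊ : ℝ≥0∞) := by rw [← hsplit]
      _ ≤ _ := by
          rw [← ENNReal.coe_add, ← ENNReal.coe_add]
          exact ENNReal.coe_le_coe.2 ((nnnorm_add_le _ _).trans
            (add_le_add_left (nnnorm_add_le _ _) _))
  have hT : Tendsto (fun n => ∫⁻ ω, (‖f (Z (u n) ω) - f (Z g₁ ω)‖₊ : ℝ≥0∞) ∂P)
      atTop (𝓝 0) := by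
    apply tendsto_of_subseq_tendsto
    intro ns hns
    have hconv2 : TendstoInMeasure P (fun k => Z (u (ns k))) atTop (Z g₁) :=
      fun ε' hε' => (hZconv ε' hε').comp hns
    obtain ⟨ms, -, hae⟩ := hconv2.exists_seq_tendsto_ae
    refine ⟨ms, ?_⟩
    have h0 : Tendsto (fun k => ∫⁻ ω, (‖f (Z (u (ns (ms k))) ω) - f (Z g₁ ω)‖₊ : ℝ≥0∞) ∂P)
        atTop (𝓝 (∫⁻ _ω, (0 : ℝ≥0∞) ∂P)) := by
      apply tendsto_lintegral_of_dominated_convergence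
        (bound := fun _ => ((‖f‖₊ : ℝ≥0∞) + (‖f‖₊ : ℝ≥0∞)))
      · exact fun k => ((hfmeas.comp (hZmeas _)).sub (hfmeas.comp (hZmeas g₁))).nnnorm.coe_nnreal_ennreal
      · intro k
        refine Filter.Eventually.of_forall fun ω => ?_
        calc (‖f (Z (u (ns (ms k))) ω) - f (Z g₁ ω)‖₊ : ℝ≥0∞)
            ≤ ((‖f (Z (u (ns (ms k))) ω)‖₊ + ‖f (Z g₁ ω)‖₊ : ℝ≥0) : ℝ≥0∞) :=
              ENNReal.coe_le_coe.2 (nnnorm_sub_le _ _)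
          _ ≤ _ := by
              rw [ENNReal.coe_add]
              exact add_le_add (ENNReal.coe_le_coe.2 (f.nnnorm_coe_le_nnnorm _))
                (ENNReal.coe_le_coe.2 (f.nnnorm_coe_le_nnnorm _))
      · simp [lintegral_const]
      · filter_upwards [hae] with ω hω
        have h1 : Tendsto (fun k => f (Z (u (ns (ms k))) ω)) atTop (𝓝 (f (Z g₁ ω))) :=
          (f.continuous.tendsto _).comp hω
        have h2 : Tendsto (fun k => f (Z (u (ns (ms k))) ω) - f (Z g₁ ω)) atTop (𝓝 0) := by
          simpa using h1.sub (tendsto_const_nhds (x := f (Z g₁ ω)))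
        have h3 : Tendsto (fun k => (‖f (Z (u (ns (ms k))) ω) - f (Z g₁ ω)‖₊ : ℝ≥0))
            atTop (𝓝 0) := by simpa using h2.nnnorm
        simpa using ENNReal.tendsto_coe.2 h3
    simpa using h0
  have hev := (ENNReal.tendsto_nhds_zero.1 hT) δ hδpos
  filter_upwards [hev] with n hn
  have hsymmeas : MeasurableSet ((Z (u n) ⁻¹' B) ∆ (Z g₁ ⁻¹' B)) :=
    (hZmeas (u n) hB).symmDiff (hZmeas g₁ hB)
  have hbound : procLaw P X ((transMap (u n) ⁻¹' cylinder s B) ∆ (transMap g₁ ⁻¹' cylinder s B))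
      ≤ δ + (∫⁻ ω, (‖f (Z (u n) ω) - f (Z g₁ ω)‖₊ : ℝ≥0∞) ∂P) + δ := by
    rw [hμeq (u n) g₁, ← lintegral_indicator_one hsymmeas]
    have m1 : Measurable fun ω => (‖I (Z (u n) ω) - f (Z (u n) ω)‖₊ : ℝ≥0∞) :=
      ((hImeas.comp (hZmeas _)).sub (hfmeas.comp (hZmeas _))).nnnorm.coe_nnreal_ennreal
    have m2 : Measurable fun ω => (‖f (Z (u n) ω) - f (Z g₁ ω)‖₊ : ℝ≥0∞) :=
      ((hfmeas.comp (hZmeas _)).sub (hfmeas.comp (hZmeas g₁))).nnnorm.coe_nnreal_ennreal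
    have m3 : Measurable fun ω => (‖f (Z g₁ ω) - I (Z g₁ ω)‖₊ : ℝ≥0∞) :=
      ((hfmeas.comp (hZmeas g₁)).sub (hImeas.comp (hZmeas g₁))).nnnorm.coe_nnreal_ennreal
    calc ∫⁻ ω, ((Z (u n) ⁻¹' B) ∆ (Z g₁ ⁻¹' B)).indicator (1 : Ω → ℝ≥0∞) ω ∂P
        ≤ ∫⁻ ω, ((‖I (Z (u n) ω) - f (Z (u n) ω)‖₊ : ℝ≥0∞)
            + (‖f (Z (u n) ω) - f (Z g₁ ω)‖₊ : ℝ≥0∞)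
            + (‖f (Z g₁ ω) - I (Z g₁ ω)‖₊ : ℝ≥0∞)) ∂P := lintegral_mono (hptw n)
      _ = (∫⁻ ω, (‖I (Z (u n) ω) - f (Z (u n) ω)‖₊ : ℝ≥0∞) ∂P)
            + (∫⁻ ω, (‖f (Z (u n) ω) - f (Z g₁ ω)‖₊ : ℝ≥0∞) ∂P)
            + (∫⁻ ω, (‖f (Z g₁ ω) - I (Z g₁ ω)‖₊ : ℝ≥0∞) ∂P) := by
          rw [lintegral_add_right _ m3, lintegral_add_right _ m2]
      _ ≤ _ := by
          refine add_le_add (add_le_add (hint1 (u n)) le_rfl) ?_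
          have : (∫⁻ ω, (‖f (Z g₁ ω) - I (Z g₁ ω)‖₊ : ℝ≥0∞) ∂P)
              = ∫⁻ ω, (‖I (Z g₁ ω) - f (Z g₁ ω)‖₊ : ℝ≥0∞) ∂P := by
            refine lintegral_congr fun ω => ?_
            rw [← nnnorm_neg, neg_sub]
          rw [this]; exact hint1 g₁
  refine hbound.trans ?_
  calc δ + (∫⁻ ω, (‖f (Z (u n) ω) - f (Z g₁ ω)‖₊ : ℝ≥0∞) ∂P) + δ
      ≤ ε / 4 + ε / 4 + ε / 4 := add_le_add (add_le_add hδle (hn.trans hδle)) hδle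
    _ = ε / 4 * 3 := by ring
    _ ≤ ε / 4 * 4 := by gcongr <;> norm_num
    _ = ε := ENNReal.div_mul_cancel (by norm_num) (by norm_num)

lemma grid_mem {eps : ℝ} (heps : 0 < eps) (c : ℝ) :
    c ≤ (⌈2 * c / eps⌉ : ℝ) * eps / 2 ∧ (⌈2 * c / eps⌉ : ℝ) * eps / 2 < c + eps / 2 := by
  have heps' : eps ≠ 0 := heps.ne'
  have e0 : 2 * c / eps * (eps / 2) = c := by field_simp
  have easc : (⌈2 * c / eps⌉ : ℝ) * eps / 2 = (⌈2 * c / eps⌉ : ℝ) * (eps / 2) :=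
    mul_div_assoc _ _ _
  constructor
  · have h1 := mul_le_mul_of_nonneg_right (Int.le_ceil (2 * c / eps))
      (by positivity : (0:ℝ) ≤ eps / 2)
    rw [e0] at h1
    linarith
  · have h2 := mul_lt_mul_of_pos_right (Int.ceil_lt_add_one (2 * c / eps))
      (by positivity : (0:ℝ) < eps / 2)
    have e1 : (2 * c / eps + 1) * (eps / 2) = c + eps / 2 := by field_simp
    rw [e1] at h2
    linarith

lemma grid_bound {eps M : ℝ} (heps : 0 < eps) {c : ℝ} (hc1 : -M - eps ≤ c) (hc2 : c ≤ M) :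
    -(⌈2 * M / eps⌉ + 2) ≤ ⌈2 * c / eps⌉ ∧ ⌈2 * c / eps⌉ ≤ ⌈2 * M / eps⌉ + 2 := by
  have heps' : eps ≠ 0 := heps.ne'
  have f1 := Int.le_ceil (2 * c / eps)
  have f2 := Int.ceil_lt_add_one (2 * c / eps)
  have f3 := Int.le_ceil (2 * M / eps)
  have hd1 : 2 * c / eps ≤ 2 * M / eps := (div_le_div_iff_of_pos_right heps).mpr (by linarith)
  have hd2 : 2 * (-M - eps) / eps ≤ 2 * c / eps :=
    (div_le_div_iff_of_pos_right heps).mpr (by linarith)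
  have e2 : 2 * (-M - eps) / eps = -(2 * M / eps) - 2 := by field_simp
  rw [e2] at hd2
  constructor
  · have : (-(⌈2 * M / eps⌉ + 2) : ℝ) ≤ ((⌈2 * c / eps⌉ : ℤ) : ℝ) := by push_cast; linarith
    exact_mod_cast this
  · have : ((⌈2 * c / eps⌉ : ℤ) : ℝ) < ((⌈2 * M / eps⌉ + 2 : ℤ) : ℝ) := by push_cast; linarith
    exact_mod_cast this.le

variable [Semigroup G] [TopologicalSpace G] [TopologicalSpace.MetrizableSpace G]
  [ContinuousMul G] [MeasurableSpace Ω] {P : Measure Ω} [IsProbabilityMeasure P]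
  {X : G → Ω → ℝ}

lemma key_tendsto (hmeas : ∀ g, Measurable (X g)) (hstat : Stationary P X)
    (hsc : StochasticallyContinuous P X)
    {E : Set (G → ℝ)} (hE : MeasurableSet E) (g₁ : G) :
    Tendsto (fun g => procLaw P X ((transMap g ⁻¹' E) ∆ (transMap g₁ ⁻¹' E)))
      (𝓝 g₁) (𝓝 0) := by
  haveI hPμ : IsProbabilityMeasure (procLaw P X) :=
    Measure.isProbabilityMeasure_map (measurable_procMap hmeas).aemeasurable
  have halg : IsSetAlgebra (measurableCylinders (fun _ : G => ℝ)) :=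
    ⟨empty_mem_measurableCylinders _, fun _ h => compl_mem_measurableCylinders h,
      fun _ _ h1 h2 => union_mem_measurableCylinders h1 h2⟩
  have hdense := Measure.MeasureDense.of_generateFrom_isSetAlgebra_finite
    (μ := procLaw P X) halg generateFrom_measurableCylinders.symm
  rw [tendsto_iff_seq_tendsto]
  intro u hu
  simp only [Function.comp_def]
  rw [ENNReal.tendsto_nhds_zero]
  intro ε hε
  set δ : ℝ≥0∞ := min 1 (ε / 4) with hδ
  have hδpos : 0 < δ := lt_min one_pos (ENNReal.div_pos hε.ne' (by norm_num))
  have hδle : δ ≤ ε / 4 := min_le_right _ _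
  have hδtop : δ ≠ ⊤ := ((min_le_left _ _).trans_lt (by norm_num)).ne
  have hδR : 0 < δ.toReal := ENNReal.toReal_pos hδpos.ne' hδtop
  obtain ⟨F, hF, hEF⟩ := hdense.approx E hE (measure_ne_top _ _) δ.toReal hδR
  rw [ENNReal.ofReal_toReal hδtop] at hEF
  obtain ⟨s', B, hB, rfl⟩ := (mem_measurableCylinders F).1 hF
  have hcylm : MeasurableSet (cylinder s' B) :=
    MeasurableSet.cylinder (α := fun _ : G => ℝ) s' hB
  have hcyl := cyl_seq hmeas hstat hsc s' hB g₁ hu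
  have hev := (ENNReal.tendsto_nhds_zero.1 hcyl) δ hδpos
  filter_upwards [hev] with n hn
  have htri : procLaw P X ((transMap (u n) ⁻¹' E) ∆ (transMap g₁ ⁻¹' E))
      ≤ procLaw P X ((transMap (u n) ⁻¹' E) ∆ (transMap (u n) ⁻¹' cylinder s' B))
        + procLaw P X ((transMap (u n) ⁻¹' cylinder s' B) ∆ (transMap g₁ ⁻¹' cylinder s' B))
        + procLaw P X ((transMap g₁ ⁻¹' cylinder s' B) ∆ (transMap g₁ ⁻¹' E)) := by
    refine le_trans (measure_symmDiff_le _ (transMap (u n) ⁻¹' cylinder s' B) _) ?_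
    rw [add_assoc]
    exact add_le_add_right (measure_symmDiff_le _ (transMap g₁ ⁻¹' cylinder s' B) _) _
  have h1 : procLaw P X ((transMap (u n) ⁻¹' E) ∆ (transMap (u n) ⁻¹' cylinder s' B))
      = procLaw P X (E ∆ cylinder s' B) := by
    rw [← Set.preimage_symmDiff, procLaw_invariant hmeas hstat (u n) (hE.symmDiff hcylm)]
  have h3 : procLaw P X ((transMap g₁ ⁻¹' cylinder s' B) ∆ (transMap g₁ ⁻¹' E))
      = procLaw P X (E ∆ cylinder s' B) := by
    rw [← Set.preimage_symmDiff, procLaw_invariant hmeas hstat g₁ (hcylm.symmDiff hE),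
      symmDiff_comm]
  refine htri.trans ?_
  rw [h1, h3]
  calc procLaw P X (E ∆ cylinder s' B)
        + procLaw P X ((transMap (u n) ⁻¹' cylinder s' B) ∆ (transMap g₁ ⁻¹' cylinder s' B))
        + procLaw P X (E ∆ cylinder s' B)
      ≤ ε / 4 + ε / 4 + ε / 4 :=
        add_le_add (add_le_add (hEF.le.trans hδle) (hn.trans hδle)) (hEF.le.trans hδle)
    _ = ε / 4 * 3 := by ring
    _ ≤ ε / 4 * 4 := by gcongr <;> norm_num
    _ = ε := ENNReal.div_mul_cancel (by norm_num) (by norm_num)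

lemma forward_cont (hmeas : ∀ g, Measurable (X g)) (hstat : Stationary P X)
    (hsc : StochasticallyContinuous P X)
    {E : Set (G → ℝ)} (hE : MeasurableSet E) (g₀ : G) :
    Continuous fun g : G => procLaw P X ((transMap g ⁻¹' E) ∆ (transMap g₀ ⁻¹' E)) := by
  rw [continuous_iff_continuousAt]
  intro g₁
  have hkey := key_tendsto hmeas hstat hsc hE g₁
  have hub : ∀ g : G, procLaw P X ((transMap g ⁻¹' E) ∆ (transMap g₀ ⁻¹' E))
      ≤ procLaw P X ((transMap g₁ ⁻¹' E) ∆ (transMap g₀ ⁻¹' E))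
        + procLaw P X ((transMap g ⁻¹' E) ∆ (transMap g₁ ⁻¹' E)) := by
    intro g
    rw [add_comm]
    exact measure_symmDiff_le _ (transMap g₁ ⁻¹' E) _
  have hlb : ∀ g : G, procLaw P X ((transMap g₁ ⁻¹' E) ∆ (transMap g₀ ⁻¹' E))
        - procLaw P X ((transMap g ⁻¹' E) ∆ (transMap g₁ ⁻¹' E))
      ≤ procLaw P X ((transMap g ⁻¹' E) ∆ (transMap g₀ ⁻¹' E)) := by
    intro g
    rw [tsub_le_iff_left]
    refine le_trans (measure_symmDiff_le _ (transMap g ⁻¹' E) _) ?_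
    rw [symmDiff_comm (transMap g₁ ⁻¹' E)]
  unfold ContinuousAt
  refine tendsto_of_tendsto_of_tendsto_of_le_of_le ?_ ?_ hlb hub
  · have := ENNReal.Tendsto.sub
      (tendsto_const_nhds (x := procLaw P X ((transMap g₁ ⁻¹' E) ∆ (transMap g₀ ⁻¹' E))))
      hkey (Or.inr ENNReal.zero_ne_top)
    simpa using this
  · have := (tendsto_const_nhds
      (x := procLaw P X ((transMap g₁ ⁻¹' E) ∆ (transMap g₀ ⁻¹' E)))).add hkey
    simpa using this

lemma backward (e : G) (he : ∀ g : G, g * e = g) (hmeas : ∀ g, Measurable (X g))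
    (hcont : ∀ E : Set (G → ℝ), MeasurableSet E → ∀ g₀ : G,
      Continuous fun g : G => procLaw P X ((transMap g ⁻¹' E) ∆ (transMap g₀ ⁻¹' E))) :
    StochasticallyContinuous P X := by
  intro g₀
  rw [tendstoInMeasure_iff_dist]
  intro ε hε
  rw [ENNReal.tendsto_nhds_zero]
  intro δ hδ
  have hδ2 : (0:ℝ≥0∞) < δ / 2 := ENNReal.div_pos hδ.ne' (by norm_num)
  have hlevm : ∀ (g' : G) (t : ℝ), MeasurableSet {ω | X g' ω ≤ t} :=
    fun g' t => measurableSet_le (hmeas g') measurable_const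
  have hDt : ∀ t : ℝ, Tendsto (fun g => P ({ω | X g ω ≤ t} ∆ {ω | X g₀ ω ≤ t}))
      (𝓝 g₀) (𝓝 0) := by
    intro t
    have hEt : MeasurableSet {x : G → ℝ | x e ≤ t} :=
      measurableSet_le (measurable_pi_apply e) measurable_const
    have hpre : ∀ g' : G, transMap g' ⁻¹' {x : G → ℝ | x e ≤ t} = {x : G → ℝ | x g' ≤ t} := by
      intro g'
      ext x
      simp [transMap, he g']
    have hQ : ∀ g : G, procLaw P X ((transMap g ⁻¹' {x : G → ℝ | x e ≤ t})
        ∆ (transMap g₀ ⁻¹' {x : G → ℝ | x e ≤ t}))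
        = P ({ω | X g ω ≤ t} ∆ {ω | X g₀ ω ≤ t}) := by
      intro g
      have hm : ∀ g' : G, MeasurableSet {x : G → ℝ | x g' ≤ t} :=
        fun g' => measurableSet_le (measurable_pi_apply g') measurable_const
      rw [hpre g, hpre g₀, procLaw_apply hmeas ((hm g).symmDiff (hm g₀)),
        Set.preimage_symmDiff]
      rfl
    have h := (hcont _ hEt g₀).tendsto g₀
    simp only [hQ] at h
    simpa [symmDiff_self, Set.bot_eq_empty] using h
  obtain ⟨M, hM⟩ : ∃ M : ℕ, P {ω | (M : ℝ) < |X g₀ ω|} ≤ δ / 2 := by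
    have hmeasn : ∀ n : ℕ, MeasurableSet {ω | (n : ℝ) < |X g₀ ω|} :=
      fun n => measurableSet_lt measurable_const (hmeas g₀).abs
    have hanti : Antitone fun n : ℕ => {ω | (n : ℝ) < |X g₀ ω|} := by
      intro m n hmn ω hω
      simp only [Set.mem_setOf_eq] at hω ⊢
      have : (m : ℝ) ≤ (n : ℝ) := by exact_mod_cast hmn
      linarith
    have hempty : (⋂ n : ℕ, {ω | (n : ℝ) < |X g₀ ω|}) = (∅ : Set Ω) := by
      ext ω
      simp only [Set.mem_iInter, Set.mem_setOf_eq, Set.mem_empty_iff_false, iff_false,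
        not_forall, not_lt]
      exact exists_nat_ge |X g₀ ω|
    have htend := tendsto_measure_iInter_atTop (μ := P)
      (fun n => (hmeasn n).nullMeasurableSet) hanti ⟨0, measure_ne_top _ _⟩
    rw [hempty] at htend
    simp only [measure_empty] at htend
    obtain ⟨M, hM⟩ := ((ENNReal.tendsto_nhds_zero.1 htend) (δ / 2) hδ2).exists
    exact ⟨M, hM⟩
  set K : ℤ := ⌈2 * (M : ℝ) / ε⌉ + 2 with hK
  have hsum : Tendsto (fun g => ∑ k ∈ Finset.Icc (-K) K,
      P ({ω | X g ω ≤ (k : ℝ) * ε / 2} ∆ {ω | X g₀ ω ≤ (k : ℝ) * ε / 2})) (𝓝 g₀) (𝓝 0) := by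
    have := tendsto_finset_sum (Finset.Icc (-K) K) fun k _ => hDt ((k : ℝ) * ε / 2)
    simpa using this
  have hev := (ENNReal.tendsto_nhds_zero.1 hsum) (δ / 2) hδ2
  filter_upwards [hev] with g hg
  have hincl : {ω | ε ≤ dist (X g ω) (X g₀ ω)}
      ⊆ {ω | (M : ℝ) < |X g₀ ω|} ∪ ⋃ k ∈ Finset.Icc (-K) K,
        ({ω | X g ω ≤ (k : ℝ) * ε / 2} ∆ {ω | X g₀ ω ≤ (k : ℝ) * ε / 2}) := by
    intro ω hω
    rw [Set.mem_setOf_eq, Real.dist_eq] at hω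
    by_cases htail : (M : ℝ) < |X g₀ ω|
    · exact Or.inl htail
    · push_neg at htail
      rw [abs_le] at htail
      right
      rcases le_abs.1 hω with hcase | hcase
      · -- ε ≤ X g ω - X g₀ ω
        obtain ⟨hkl, hku⟩ := grid_mem hε (X g₀ ω)
        obtain ⟨hb1, hb2⟩ := grid_bound (M := (M:ℝ)) hε
          (by linarith [htail.1] : -(M:ℝ) - ε ≤ X g₀ ω) htail.2
        have hkK : (⌈2 * X g₀ ω / ε⌉ : ℤ) ∈ Finset.Icc (-K) K := by
          rw [hK]
          exact Finset.mem_Icc.2 ⟨hb1, hb2⟩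
        refine Set.mem_biUnion hkK ?_
        refine Set.mem_symmDiff.2 (Or.inr ⟨hkl, fun hc => ?_⟩)
        simp only [Set.mem_setOf_eq] at hc
        linarith
      · -- ε ≤ -(X g ω - X g₀ ω), i.e. X g ω ≤ X g₀ ω - ε
        obtain ⟨hkl, hku⟩ := grid_mem hε (X g₀ ω - ε)
        obtain ⟨hb1, hb2⟩ := grid_bound (M := (M:ℝ)) hε
          (by linarith [htail.1] : -(M:ℝ) - ε ≤ X g₀ ω - ε) (by linarith [htail.2])
        have hkK : (⌈2 * (X g₀ ω - ε) / ε⌉ : ℤ) ∈ Finset.Icc (-K) K := by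
          rw [hK]
          exact Finset.mem_Icc.2 ⟨hb1, hb2⟩
        refine Set.mem_biUnion hkK ?_
        refine Set.mem_symmDiff.2 (Or.inl ⟨by simp only [Set.mem_setOf_eq]; linarith,
          fun hcon => ?_⟩)
        simp only [Set.mem_setOf_eq] at hcon
        linarith
  calc P {ω | ε ≤ dist (X g ω) (X g₀ ω)}
      ≤ P ({ω | (M : ℝ) < |X g₀ ω|} ∪ ⋃ k ∈ Finset.Icc (-K) K,
          ({ω | X g ω ≤ (k : ℝ) * ε / 2} ∆ {ω | X g₀ ω ≤ (k : ℝ) * ε / 2})) :=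
        measure_mono hincl
    _ ≤ P {ω | (M : ℝ) < |X g₀ ω|} + P (⋃ k ∈ Finset.Icc (-K) K,
          ({ω | X g ω ≤ (k : ℝ) * ε / 2} ∆ {ω | X g₀ ω ≤ (k : ℝ) * ε / 2})) :=
        measure_union_le _ _
    _ ≤ δ / 2 + δ / 2 := by
        refine add_le_add hM (le_trans (measure_biUnion_finset_le _ _) hg)
    _ = δ := ENNReal.add_halves δ

end Main

/-- Hoffmann-Jørgensen/Pursley: a stationary process over a metrizable
topological semigroup `G` with a right unit `e` is stochastically continuous iff for
every `E ∈ ℬ^G` and `g₀ ∈ G` the map `g ↦ ℙ_X(Q_g⁻¹(E) ∆ Q_{g₀}⁻¹(E))` is continuous. -/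
theorem pursley_semigroup
    {G : Type*} [Semigroup G] [TopologicalSpace G] [TopologicalSpace.MetrizableSpace G]
    [ContinuousMul G] (e : G) (he : ∀ g : G, g * e = g)
    {Ω : Type*} [MeasurableSpace Ω] (P : Measure Ω) [IsProbabilityMeasure P]
    (X : G → Ω → ℝ) (hmeas : ∀ g, Measurable (X g)) (hstat : Stationary P X) :
    StochasticallyContinuous P X ↔
      ∀ E : Set (G → ℝ), MeasurableSet E → ∀ g₀ : G,
        Continuous fun g : G =>
          procLaw P X ((transMap g ⁻¹' E) ∆ (transMap g₀ ⁻¹' E)) := by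
  constructor
  · intro hsc E hE g₀
    exact forward_cont hmeas hstat hsc hE g₀
  · intro hcont
    exact backward e he hmeas hcont

end Paper
end
end

section
/- Let Γ be a Polish group, G ≤ Γ a dense subgroup, and X a stochastically continuous stationary Γ-process. Then for every A in the product σ-algebra ℬ^Γ, one has ℙ_X(R_g⁻¹(A) △ A) = 0 for all g∈G if and only if ℙ_X(R_γ⁻¹(A) △ A) = 0 for all γ∈Γ. -/
open MeasureTheory ProbabilityTheory Filter Topology symmDiff

noncomputable section

namespace Paper

variable {G : Type*} {Ω : Type*}

section Aux

open Set MeasurableSpace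

/-- Any dense (e.g. co-countable) family of `Iio`'s generates the Borel σ-algebra of `ℝ`. -/
lemma real_le_generateFrom_Iio {D : Set ℝ} (hD : Dᶜ.Countable) :
    (inferInstance : MeasurableSpace ℝ) ≤ .generateFrom (Set.Iio '' D) := by
  have hb : (inferInstance : MeasurableSpace ℝ) = borel ℝ := rfl
  rw [hb, borel_eq_generateFrom_Iio]
  refine MeasurableSpace.generateFrom_le ?_
  rintro _ ⟨a, rfl⟩
  have hc : ∀ n : ℕ, ∃ c, c ∈ D ∧ c ∈ Set.Ioo (a - 1 / (n + 1)) a := by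
    intro n
    by_contra h
    push_neg at h
    have hsub : Set.Ioo (a - 1 / (n + 1 : ℝ)) a ⊆ Dᶜ := by
      intro x hx hxD
      exact h x hxD hx
    have hcnt : (Set.Ioo (a - 1 / (n + 1 : ℝ)) a).Countable := hD.mono hsub
    have hlt : a - 1 / (n + 1 : ℝ) < a := by
      have : (0 : ℝ) < 1 / (n + 1) := by positivity
      linarith
    rw [← Cardinal.le_aleph0_iff_set_countable, Cardinal.mk_Ioo_real hlt] at hcnt
    exact Cardinal.aleph0_lt_continuum.not_ge hcnt
  choose c hcD hcIoo using hc
  have key : Set.Iio a = ⋃ n, Set.Iio (c n) := by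
    ext y
    simp only [Set.mem_iUnion, Set.mem_Iio]
    constructor
    · intro hy
      obtain ⟨n, hn⟩ := exists_nat_one_div_lt (sub_pos.2 hy)
      exact ⟨n, by have := (hcIoo n).1; linarith⟩
    · rintro ⟨n, hn⟩
      exact hn.trans (hcIoo n).2
  rw [key]
  exact MeasurableSet.iUnion fun n =>
    MeasurableSpace.measurableSet_generateFrom ⟨c n, hcD n, rfl⟩

lemma symmDiff_union_subset {α : Type*} (s t u v : Set α) :
    (s ∪ t) ∆ (u ∪ v) ⊆ s ∆ u ∪ t ∆ v := by
  intro x hx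
  simp only [Set.mem_symmDiff, Set.mem_union] at *
  tauto

variable {Γ : Type*} [Group Γ]

lemma measurable_shiftMap (g : Γ) : Measurable (shiftMap (G := Γ) g) :=
  measurable_pi_lambda _ fun h => measurable_pi_apply _

lemma shiftMap_preimage (g k : Γ) (A : Set (Γ → ℝ)) :
    shiftMap k ⁻¹' (shiftMap g ⁻¹' A) = shiftMap (g * k) ⁻¹' A := by
  have : shiftMap g ∘ shiftMap k = shiftMap (G := Γ) (g * k) := by
    funext x h
    simp [shiftMap, mul_assoc]
  rw [← Set.preimage_comp, this]

lemma shiftMap_one : shiftMap (G := Γ) 1 = id := by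
  funext x h; simp [shiftMap]

variable {Ω : Type*} [MeasurableSpace Ω]

lemma map_shiftMap (P : Measure Ω) (X : Γ → Ω → ℝ) (hmeas : ∀ γ, Measurable (X γ))
    (hstat : Stationary P X) (g : Γ) :
    Measure.map (shiftMap g) (procLaw P X) = procLaw P X := by
  have hθ : Measurable (fun ω (h : Γ) => X h ω) := measurable_pi_lambda _ hmeas
  rw [procLaw, Measure.map_map (measurable_shiftMap g) hθ]
  exact hstat g⁻¹

lemma shiftMap_measure_preimage (P : Measure Ω) (X : Γ → Ω → ℝ)
    (hmeas : ∀ γ, Measurable (X γ)) (hstat : Stationary P X) (g : Γ)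
    {S : Set (Γ → ℝ)} (hS : MeasurableSet S) :
    procLaw P X (shiftMap g ⁻¹' S) = procLaw P X S := by
  conv_rhs => rw [← map_shiftMap P X hmeas hstat g]
  rw [Measure.map_apply (measurable_shiftMap g) hS]

/-- Core continuity lemma: along any sequence tending to `1`, the measure of the
symmetric difference of a measurable set and its translate tends to `0`. -/
lemma tendsto_symmDiff_measure_zero
    {Γ : Type*} [Group Γ] [TopologicalSpace Γ] [IsTopologicalGroup Γ]
    {Ω : Type*} [MeasurableSpace Ω] (P : Measure Ω) [IsProbabilityMeasure P]
    (X : Γ → Ω → ℝ) (hmeas : ∀ γ, Measurable (X γ)) (hstat : Stationary P X)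
    (hcont : StochasticallyContinuous P X)
    (δ : ℕ → Γ) (hδ : Tendsto δ atTop (𝓝 1)) :
    ∀ A : Set (Γ → ℝ), MeasurableSet A →
      Tendsto (fun n => procLaw P X ((shiftMap (δ n) ⁻¹' A) ∆ A)) atTop (𝓝 0) := by
  intro A hA
  classical
  set μ := procLaw P X with hμ
  have hθ : Measurable (fun ω (h : Γ) => X h ω) := measurable_pi_lambda _ hmeas
  haveI hμprob : IsProbabilityMeasure μ := by
    rw [hμ, procLaw]; exact Measure.isProbabilityMeasure_map hθ.aemeasurable
  have hpres : ∀ (g : Γ) (S : Set (Γ → ℝ)), MeasurableSet S →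
      μ (shiftMap g ⁻¹' S) = μ S :=
    fun g S hS => shiftMap_measure_preimage P X hmeas hstat g hS
  set C : Set (Set (Γ → ℝ)) :=
    {S | MeasurableSet S ∧ Tendsto (fun n => μ ((shiftMap (δ n) ⁻¹' S) ∆ S)) atTop (𝓝 0)}
    with hC
  suffices hAC : A ∈ C by exact hAC.2
  -- closure of `C` under approximation in measure
  have happrox : ∀ S : Set (Γ → ℝ), MeasurableSet S →
      (∀ ε : ENNReal, 0 < ε → ∃ B ∈ C, μ (S ∆ B) ≤ ε) → S ∈ C := by
    intro S hS hap
    refine ⟨hS, ENNReal.tendsto_atTop_zero.2 fun ε hε => ?_⟩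
    have h2 : (0 : ENNReal) < ε / 2 := ENNReal.half_pos hε.ne'
    have h4 : (0 : ENNReal) < ε / 2 / 2 := ENNReal.half_pos h2.ne'
    obtain ⟨B, hB, hSB⟩ := hap (ε / 2 / 2) h4
    obtain ⟨N, hN⟩ := ENNReal.tendsto_atTop_zero.1 hB.2 (ε / 2) h2
    refine ⟨N, fun n hn => ?_⟩
    have hmB := hB.1
    have hstep : μ ((shiftMap (δ n) ⁻¹' S) ∆ S)
        ≤ ε / 2 / 2 + (ε / 2 + ε / 2 / 2) := by
      calc μ ((shiftMap (δ n) ⁻¹' S) ∆ S)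
          ≤ μ ((shiftMap (δ n) ⁻¹' S) ∆ (shiftMap (δ n) ⁻¹' B))
            + μ ((shiftMap (δ n) ⁻¹' B) ∆ S) := measure_symmDiff_le _ _ _
        _ ≤ μ ((shiftMap (δ n) ⁻¹' S) ∆ (shiftMap (δ n) ⁻¹' B))
            + (μ ((shiftMap (δ n) ⁻¹' B) ∆ B) + μ (B ∆ S)) := by
            exact add_le_add le_rfl (measure_symmDiff_le _ B _)
        _ = μ (S ∆ B) + (μ ((shiftMap (δ n) ⁻¹' B) ∆ B) + μ (S ∆ B)) := by
            rw [← Set.preimage_symmDiff, hpres _ _ (hS.symmDiff hmB), symmDiff_comm B S]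
        _ ≤ ε / 2 / 2 + (ε / 2 + ε / 2 / 2) := by
            exact add_le_add hSB (add_le_add (hN n hn) hSB)
    refine hstep.trans (le_of_eq ?_)
    rw [add_comm (ε / 2) (ε / 2 / 2), ← add_assoc, ENNReal.add_halves, ENNReal.add_halves]
  -- closure under complement
  have hcompl : ∀ S ∈ C, Sᶜ ∈ C := by
    intro S hS
    refine ⟨hS.1.compl, ?_⟩
    simpa only [Set.preimage_compl, compl_symmDiff_compl] using hS.2
  -- closure under binary union
  have hunion2 : ∀ S ∈ C, ∀ T ∈ C, S ∪ T ∈ C := by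
    intro S hS T hT
    refine ⟨hS.1.union hT.1, ENNReal.tendsto_atTop_zero.2 fun ε hε => ?_⟩
    have h2 : (0 : ENNReal) < ε / 2 := ENNReal.half_pos hε.ne'
    obtain ⟨N₁, hN₁⟩ := ENNReal.tendsto_atTop_zero.1 hS.2 (ε / 2) h2
    obtain ⟨N₂, hN₂⟩ := ENNReal.tendsto_atTop_zero.1 hT.2 (ε / 2) h2
    refine ⟨max N₁ N₂, fun n hn => ?_⟩
    have hb : μ ((shiftMap (δ n) ⁻¹' (S ∪ T)) ∆ (S ∪ T))
        ≤ μ ((shiftMap (δ n) ⁻¹' S) ∆ S) + μ ((shiftMap (δ n) ⁻¹' T) ∆ T) := by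
      rw [Set.preimage_union]
      exact (measure_mono (symmDiff_union_subset _ _ _ _)).trans (measure_union_le _ _)
    refine hb.trans ?_
    calc μ ((shiftMap (δ n) ⁻¹' S) ∆ S) + μ ((shiftMap (δ n) ⁻¹' T) ∆ T)
        ≤ ε / 2 + ε / 2 :=
          add_le_add (hN₁ n (le_trans (le_max_left _ _) hn))
            (hN₂ n (le_trans (le_max_right _ _) hn))
      _ = ε := ENNReal.add_halves ε
  -- closure under countable union
  have hiUnion : ∀ f : ℕ → Set (Γ → ℝ), (∀ i, f i ∈ C) → (⋃ i, f i) ∈ C := by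
    intro f hf
    have hmU : MeasurableSet (⋃ i, f i) := MeasurableSet.iUnion fun i => (hf i).1
    refine happrox _ hmU fun ε hε => ?_
    have hmacc : ∀ n, MeasurableSet (Set.accumulate f n) := fun n =>
      MeasurableSet.biUnion (Set.to_countable _) fun i _ => (hf i).1
    have hacc : ∀ n, Set.accumulate f n ∈ C := by
      intro n
      induction n with
      | zero =>
        have : Set.accumulate f 0 = f 0 := by
          ext x; simp [Set.mem_accumulate, Nat.le_zero]
        rw [this]; exact hf 0
      | succ n ih =>
        have : Set.accumulate f (n + 1) = Set.accumulate f n ∪ f (n + 1) := by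
          ext x; simp only [Set.mem_accumulate, Set.mem_union, Nat.le_add_one_iff]
          constructor
          · rintro ⟨y, hy | hy, hx⟩
            · exact Or.inl ⟨y, hy, hx⟩
            · exact Or.inr (hy ▸ hx)
          · rintro (⟨y, hy, hx⟩ | hx)
            · exact ⟨y, Or.inl hy, hx⟩
            · exact ⟨n + 1, Or.inr rfl, hx⟩
        rw [this]; exact hunion2 _ ih _ (hf (n + 1))
    have hanti : Antitone fun n => (⋃ i, f i) \ Set.accumulate f n := fun m n hmn =>
      Set.diff_subset_diff_right (Set.monotone_accumulate hmn)
    have hiInter : ⋂ n, ((⋃ i, f i) \ Set.accumulate f n) = ∅ := by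
      rw [← Set.diff_iUnion, Set.iUnion_accumulate, Set.diff_self]
    have htd : Tendsto (fun n => μ ((⋃ i, f i) \ Set.accumulate f n)) atTop (𝓝 0) := by
      have h1 := tendsto_measure_iInter_atTop (μ := μ)
        (fun n => (hmU.diff (hmacc n)).nullMeasurableSet) hanti ⟨0, measure_ne_top μ _⟩
      rw [hiInter] at h1
      simpa [Function.comp_def] using h1
    obtain ⟨N, hN⟩ := ENNReal.tendsto_atTop_zero.1 htd ε hε
    refine ⟨Set.accumulate f N, hacc N, ?_⟩
    rw [symmDiff_of_ge (Set.accumulate_subset_iUnion N)]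
    exact hN N le_rfl
  -- basic sets (half-space cylinders at non-atoms) are in `C`
  have hgen : ∀ (h : Γ) (c : ℝ), P {ω | X h ω = c} = 0 →
      ((fun x : Γ → ℝ => x h) ⁻¹' Set.Iio c) ∈ C := by
    intro h c hc
    have hmS : MeasurableSet ((fun x : Γ → ℝ => x h) ⁻¹' Set.Iio c) :=
      measurable_pi_apply h measurableSet_Iio
    refine ⟨hmS, ENNReal.tendsto_atTop_zero.2 fun ε hε => ?_⟩
    have h2 : (0 : ENNReal) < ε / 2 := ENNReal.half_pos hε.ne'
    have hEmeas : ∀ k : ℕ, MeasurableSet {ω | dist (X h ω) c ≤ 1 / ((k : ℝ) + 1)} := fun k =>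
      measurableSet_le ((hmeas h).dist measurable_const) measurable_const
    have hiE : ⋂ k : ℕ, {ω | dist (X h ω) c ≤ 1 / ((k : ℝ) + 1)} = {ω | X h ω = c} := by
      ext ω
      simp only [Set.mem_iInter, Set.mem_setOf_eq]
      constructor
      · intro hk
        have hd0 : dist (X h ω) c ≤ 0 := by
          by_contra hpos
          push_neg at hpos
          obtain ⟨k, hk'⟩ := exists_nat_one_div_lt hpos
          have := hk k
          linarith
        exact dist_le_zero.1 hd0
      · intro he k
        rw [he, dist_self]
        positivity
    have hEanti : Antitone fun k : ℕ => {ω | dist (X h ω) c ≤ 1 / ((k : ℝ) + 1)} := by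
      intro k l hkl ω hω
      simp only [Set.mem_setOf_eq] at hω ⊢
      have hkl' : (k : ℝ) + 1 ≤ (l : ℝ) + 1 := by
        have : (k : ℝ) ≤ l := Nat.cast_le.2 hkl
        linarith
      have : 1 / ((l : ℝ) + 1) ≤ 1 / ((k : ℝ) + 1) :=
        one_div_le_one_div_of_le (by positivity) hkl'
      linarith
    have hEt : Tendsto (fun k : ℕ => P {ω | dist (X h ω) c ≤ 1 / ((k : ℝ) + 1)}) atTop (𝓝 0) := by
      have h1 := tendsto_measure_iInter_atTop (μ := P)
        (fun k => (hEmeas k).nullMeasurableSet) hEanti ⟨0, measure_ne_top P _⟩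
      rw [hiE] at h1
      have h2' : P {ω | X h ω = c} = 0 := hc
      rw [h2'] at h1
      simpa [Function.comp_def, one_div] using h1
    obtain ⟨K, hK⟩ := ENNReal.tendsto_atTop_zero.1 hEt (ε / 2) h2
    have hηpos0 : (0:ℝ) < 1 / ((K : ℝ) + 1) := one_div_pos.mpr (by positivity)
    set η : ℝ := 1 / ((K : ℝ) + 1) with hηdef
    have hηpos : 0 < η := hηpos0
    have hu : Tendsto (fun n => (δ n)⁻¹ * h) atTop (𝓝 h) := by
      have h1 : Tendsto (fun n => (δ n)⁻¹) atTop (𝓝 (1 : Γ)⁻¹) := hδ.inv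
      have h3 := h1.mul (tendsto_const_nhds : Tendsto (fun _ : ℕ => h) atTop (𝓝 h))
      simpa using h3
    have htm : Tendsto (fun n => P {x | η ≤ dist (X ((δ n)⁻¹ * h) x) (X h x)}) atTop (𝓝 0) :=
      (tendstoInMeasure_iff_dist.1 (hcont h) η hηpos).comp hu
    obtain ⟨N, hN⟩ := ENNReal.tendsto_atTop_zero.1 htm (ε / 2) h2
    refine ⟨N, fun n hn => ?_⟩
    have hmS' : MeasurableSet
        ((shiftMap (δ n) ⁻¹' ((fun x : Γ → ℝ => x h) ⁻¹' Set.Iio c))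
          ∆ ((fun x : Γ → ℝ => x h) ⁻¹' Set.Iio c)) :=
      ((measurable_shiftMap (δ n)) hmS).symmDiff hmS
    have hmap : μ ((shiftMap (δ n) ⁻¹' ((fun x : Γ → ℝ => x h) ⁻¹' Set.Iio c))
          ∆ ((fun x : Γ → ℝ => x h) ⁻¹' Set.Iio c))
        = P ((X ((δ n)⁻¹ * h) ⁻¹' Set.Iio c) ∆ (X h ⁻¹' Set.Iio c)) := by
      rw [hμ, procLaw, Measure.map_apply hθ hmS', Set.preimage_symmDiff]
      rfl
    rw [hmap]
    have hsub : (X ((δ n)⁻¹ * h) ⁻¹' Set.Iio c) ∆ (X h ⁻¹' Set.Iio c) ⊆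
        {x | η ≤ dist (X ((δ n)⁻¹ * h) x) (X h x)}
          ∪ {ω | dist (X h ω) c ≤ 1 / ((K : ℝ) + 1)} := by
      intro ω hω
      rcases le_or_gt η (dist (X ((δ n)⁻¹ * h) ω) (X h ω)) with hd | hd
      · exact Or.inl hd
      · refine Or.inr ?_
        rw [Set.mem_symmDiff] at hω
        rw [Real.dist_eq, abs_lt] at hd
        simp only [Set.mem_preimage, Set.mem_Iio, Set.mem_setOf_eq] at hω ⊢
        rw [Real.dist_eq, abs_le, ← hηdef]
        rcases hω with ⟨h1, h2'⟩ | ⟨h1, h2'⟩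
        · push_neg at h2'
          constructor <;> linarith [hd.1, hd.2]
        · push_neg at h2'
          constructor <;> linarith [hd.1, hd.2]
    calc P ((X ((δ n)⁻¹ * h) ⁻¹' Set.Iio c) ∆ (X h ⁻¹' Set.Iio c))
        ≤ P ({x | η ≤ dist (X ((δ n)⁻¹ * h) x) (X h x)}
            ∪ {ω | dist (X h ω) c ≤ 1 / ((K : ℝ) + 1)}) := measure_mono hsub
      _ ≤ P {x | η ≤ dist (X ((δ n)⁻¹ * h) x) (X h x)}
            + P {ω | dist (X h ω) c ≤ 1 / ((K : ℝ) + 1)} := measure_union_le _ _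
      _ ≤ ε / 2 + ε / 2 := add_le_add (hN n hn) (hK K le_rfl)
      _ = ε := ENNReal.add_halves ε
  -- assemble a σ-algebra out of `C`
  set mC : MeasurableSpace (Γ → ℝ) :=
    { MeasurableSet' := fun S => S ∈ C
      measurableSet_empty := ⟨MeasurableSet.empty, by
        simp only [Set.preimage_empty, symmDiff_self, Set.bot_eq_empty, measure_empty]
        exact tendsto_const_nhds⟩
      measurableSet_compl := fun S hS => hcompl S hS
      measurableSet_iUnion := fun f hf => hiUnion f hf } with hmC
  have hle : (MeasurableSpace.pi : MeasurableSpace (Γ → ℝ)) ≤ mC := by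
    show (⨆ h : Γ, MeasurableSpace.comap (fun x : Γ → ℝ => x h)
      (inferInstance : MeasurableSpace ℝ)) ≤ mC
    refine iSup_le fun h => ?_
    set D := {c : ℝ | P {ω | X h ω = c} = 0} with hD
    have hDc : Dᶜ.Countable := by
      have h1 := Measure.countable_meas_level_set_pos (μ := P) (hmeas h)
      refine h1.mono ?_
      intro c hcD
      simp only [hD, Set.mem_compl_iff, Set.mem_setOf_eq] at hcD
      simpa [pos_iff_ne_zero] using hcD
    calc MeasurableSpace.comap (fun x : Γ → ℝ => x h) inferInstance
        ≤ MeasurableSpace.comap (fun x : Γ → ℝ => x h)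
            (.generateFrom (Set.Iio '' D)) :=
          MeasurableSpace.comap_mono (real_le_generateFrom_Iio hDc)
      _ = .generateFrom (Set.preimage (fun x : Γ → ℝ => x h) '' (Set.Iio '' D)) :=
          MeasurableSpace.comap_generateFrom
      _ ≤ mC := by
          refine MeasurableSpace.generateFrom_le ?_
          rintro _ ⟨_, ⟨c, hcD, rfl⟩, rfl⟩
          exact hgen h c hcD
  exact hle A hA

end Aux

/-- for a stochastically continuous stationary process over a Polish
group `Γ` and a dense subgroup `G ≤ Γ`, a measurable set `A ⊆ ℝ^Γ` is a.s. invariant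
under all translations from `G` iff it is a.s. invariant under all translations
from `Γ`. -/
theorem invariant_dense_iff_invariant
    {Γ : Type*} [Group Γ] [TopologicalSpace Γ] [IsTopologicalGroup Γ] [PolishSpace Γ]
    (G : Subgroup Γ) (hG : Dense (G : Set Γ))
    {Ω : Type*} [MeasurableSpace Ω] (P : Measure Ω) [IsProbabilityMeasure P]
    (X : Γ → Ω → ℝ) (hmeas : ∀ γ, Measurable (X γ)) (hstat : Stationary P X)
    (hcont : StochasticallyContinuous P X) :
    ∀ A : Set (Γ → ℝ), MeasurableSet A →
      ((∀ g ∈ G, procLaw P X ((shiftMap g ⁻¹' A) ∆ A) = 0) ↔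
        (∀ γ : Γ, procLaw P X ((shiftMap γ ⁻¹' A) ∆ A) = 0)) := by
  intro A hA
  constructor
  · intro hGinv γ
    have hγ : γ ∈ closure (G : Set Γ) := hG γ
    obtain ⟨g, hgmem, hgt⟩ := mem_closure_iff_seq_limit.1 hγ
    have hδ : Tendsto (fun n => γ * (g n)⁻¹) atTop (𝓝 1) := by
      have h1 := (tendsto_const_nhds : Tendsto (fun _ : ℕ => γ) atTop (𝓝 γ)).mul hgt.inv
      simpa using h1
    have key := tendsto_symmDiff_measure_zero P X hmeas hstat hcont
      (fun n => γ * (g n)⁻¹) hδ A hA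
    have hbound : ∀ n, procLaw P X ((shiftMap γ ⁻¹' A) ∆ A)
        ≤ procLaw P X ((shiftMap (γ * (g n)⁻¹) ⁻¹' A) ∆ A) := by
      intro n
      have h0 : procLaw P X ((shiftMap (g n) ⁻¹' A) ∆ A) = 0 := hGinv (g n) (hgmem n)
      have hmm : MeasurableSet ((shiftMap γ ⁻¹' A) ∆ (shiftMap (g n) ⁻¹' A)) :=
        ((measurable_shiftMap γ) hA).symmDiff ((measurable_shiftMap (g n)) hA)
      have heq : procLaw P X ((shiftMap γ ⁻¹' A) ∆ (shiftMap (g n) ⁻¹' A)) =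
          procLaw P X ((shiftMap (γ * (g n)⁻¹) ⁻¹' A) ∆ A) := by
        rw [← shiftMap_measure_preimage P X hmeas hstat (g n)⁻¹ hmm,
          Set.preimage_symmDiff, shiftMap_preimage, shiftMap_preimage,
          mul_inv_cancel, shiftMap_one, Set.preimage_id]
      calc procLaw P X ((shiftMap γ ⁻¹' A) ∆ A)
          ≤ procLaw P X ((shiftMap γ ⁻¹' A) ∆ (shiftMap (g n) ⁻¹' A))
            + procLaw P X ((shiftMap (g n) ⁻¹' A) ∆ A) := measure_symmDiff_le _ _ _
        _ = procLaw P X ((shiftMap (γ * (g n)⁻¹) ⁻¹' A) ∆ A) := by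
            rw [heq, h0, add_zero]
    have hle0 : procLaw P X ((shiftMap γ ⁻¹' A) ∆ A) ≤ 0 := ge_of_tendsto' key hbound
    exact le_antisymm hle0 zero_le
  · intro h g _
    exact h g

end Paper
end
end
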